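/- Let k = 2ℓ+1 be odd and F the k-dimensional Lyness map. Then W(x)·W(F(x)) = V_1(x) for all x in the positive orthant, where W(x) = (Π_{j=0}^{ℓ}(x_{2j+1}+1))/(Π_{j=1}^{ℓ} x_{2j}) and V_1 is the standard first integral (a + Σ x_i)·Π(x_i+1)/Π x_i. -/

import Mathlib

private lemma prod_parity_split (l : ℕ) (f : ℕ → ℝ) :
    ∏ i ∈ Finset.range (2*l+1), f i =
      (∏ j ∈ Finset.range (l+1), f (2*j)) * ∏ j ∈ Finset.range l, f (2*j+1) := by
  induction l with
  | zero => simp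
  | succ n ih =>
    have h1 : 2*(n+1)+1 = (2*n+1) + 1 + 1 := by ring
    rw [h1, Finset.prod_range_succ, Finset.prod_range_succ, ih]
    simp only [Finset.prod_range_succ]
    have h2 : 2*n+1+1 = 2*(n+1) := by ring
    rw [h2]
    ring

/-- for odd `k = 2ℓ+1`, `W(x)·W(F(x)) = V₁(x)`. -/
theorem lyness_W_mul_WF_eq_V1 (l : ℕ) (hl : 1 ≤ l) (a : ℝ) (ha : 0 ≤ a)
    (F : (Fin (2 * l + 1) → ℝ) → (Fin (2 * l + 1) → ℝ))
    (hF : ∀ x : Fin (2 * l + 1) → ℝ, ∀ i : Fin (2 * l + 1),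
      F x i = if h : (i : ℕ) + 1 < 2 * l + 1 then x ⟨(i : ℕ) + 1, h⟩
              else (a + (∑ j, x j) - x ⟨0, by omega⟩) / x ⟨0, by omega⟩)
    (W : (Fin (2 * l + 1) → ℝ) → ℝ)
    (hW : ∀ x : Fin (2 * l + 1) → ℝ, W x =
      (∏ j : Fin (l + 1), (x ⟨2 * (j : ℕ), by have := j.isLt; omega⟩ + 1)) /
        ∏ j : Fin l, x ⟨2 * (j : ℕ) + 1, by have := j.isLt; omega⟩)
    (V1 : (Fin (2 * l + 1) → ℝ) → ℝ)
    (hV1 : ∀ x : Fin (2 * l + 1) → ℝ,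
      V1 x = (a + ∑ j, x j) * (∏ j, (x j + 1)) / ∏ j, x j)
    (x : Fin (2 * l + 1) → ℝ) (hx : ∀ i, 0 < x i) :
    W x * W (F x) = V1 x := by
  set S := ∑ j, x j with hS
  set y : ℕ → ℝ := fun i => if h : i < 2*l+1 then x ⟨i, h⟩ else 1 with hy_def
  have hy : ∀ i, 0 < y i := by
    intro i
    simp only [hy_def]
    split
    · exact hx _
    · norm_num
  have hxy : ∀ (m : ℕ) (h : m < 2*l+1), x ⟨m, h⟩ = y m := by
    intro m h; simp only [hy_def, dif_pos h]
  set g : ℕ → ℝ := fun m => if h : m < 2*l+1 then F x ⟨m, h⟩ else 1 with hg_def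
  have hgy : ∀ (m : ℕ), m + 1 < 2*l+1 → g m = y (m+1) := by
    intro m h
    have hm : m < 2*l+1 := by omega
    simp only [hg_def]
    rw [dif_pos hm, hF]
    simp only [dif_pos h]
    exact hxy _ _
  have hglast : g (2*l) = (a + S - y 0) / y 0 := by
    have hm : 2*l < 2*l+1 := by omega
    simp only [hg_def]
    rw [dif_pos hm, hF]
    have : ¬ ((2*l : ℕ) + 1 < 2*l+1) := by omega
    rw [dif_neg this]
    rw [hxy 0 (by omega)]
  have hFg : ∀ (m : ℕ) (h : m < 2*l+1), F x ⟨m, h⟩ = g m := by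
    intro m h; simp only [hg_def, dif_pos h]
  have hWx : W x = (∏ j ∈ Finset.range (l+1), (y (2*j) + 1)) /
      ∏ j ∈ Finset.range l, y (2*j+1) := by
    rw [hW]
    congr 1
    · rw [← Fin.prod_univ_eq_prod_range (fun j => y (2*j) + 1)]
      exact Finset.prod_congr rfl fun j _ => by rw [hxy]
    · rw [← Fin.prod_univ_eq_prod_range (fun j => y (2*j+1))]
      exact Finset.prod_congr rfl fun j _ => by rw [hxy]
  have hWFx : W (F x) = ((∏ j ∈ Finset.range l, (y (2*j+1) + 1)) * ((a + S) / y 0)) /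
      ∏ j ∈ Finset.range l, y (2*j+2) := by
    rw [hW]
    congr 1
    · rw [show (∏ j : Fin (l+1), (F x ⟨2 * (j : ℕ), by have := j.isLt; omega⟩ + 1))
          = ∏ j : Fin (l+1), (g (2*(j:ℕ)) + 1) from
        Finset.prod_congr rfl fun j _ => by rw [hFg]]
      rw [Fin.prod_univ_eq_prod_range (fun j => g (2*j) + 1) (l+1),
        Finset.prod_range_succ]
      have h1 : ∀ j ∈ Finset.range l, g (2*j) + 1 = y (2*j+1) + 1 := by
        intro j hj
        rw [hgy]
        simp only [Finset.mem_range] at hj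
        omega
      rw [Finset.prod_congr rfl h1, hglast]
      have hy0 : y 0 ≠ 0 := ne_of_gt (hy 0)
      field_simp
      ring
    · rw [show (∏ j : Fin l, F x ⟨2 * (j : ℕ) + 1, by have := j.isLt; omega⟩)
          = ∏ j : Fin l, g (2*(j:ℕ)+1) from
        Finset.prod_congr rfl fun j _ => by rw [hFg]]
      rw [Fin.prod_univ_eq_prod_range (fun j => g (2*j+1))]
      refine Finset.prod_congr rfl fun j hj => ?_
      simp only [Finset.mem_range] at hj
      rw [hgy] <;> omega
  have hProdX : ∏ j, x j = (y 0 * ∏ j ∈ Finset.range l, y (2*j+2)) *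
      ∏ j ∈ Finset.range l, y (2*j+1) := by
    rw [show (∏ j, x j) = ∏ j : Fin (2*l+1), y (j:ℕ) from
      Finset.prod_congr rfl fun j _ => by rw [← hxy j j.isLt]]
    rw [Fin.prod_univ_eq_prod_range y, prod_parity_split, Finset.prod_range_succ']
    have h3 : ∀ j ∈ Finset.range l, y (2*(j+1)) = y (2*j+2) := by
      intro j hj; congr 1
    rw [Finset.prod_congr rfl h3]
    simp only [Nat.mul_zero]
    ring
  have hProdX1 : ∏ j, (x j + 1) =
      (∏ j ∈ Finset.range (l+1), (y (2*j) + 1)) *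
        ∏ j ∈ Finset.range l, (y (2*j+1) + 1) := by
    rw [show (∏ j, (x j + 1)) = ∏ j : Fin (2*l+1), (y (j:ℕ) + 1) from
      Finset.prod_congr rfl fun j _ => by rw [← hxy j j.isLt]]
    rw [Fin.prod_univ_eq_prod_range (fun i => y i + 1), prod_parity_split]
  have hV1x : V1 x = (a + S) *
      ((∏ j ∈ Finset.range (l+1), (y (2*j) + 1)) *
        ∏ j ∈ Finset.range l, (y (2*j+1) + 1)) /
      ((y 0 * ∏ j ∈ Finset.range l, y (2*j+2)) *
        ∏ j ∈ Finset.range l, y (2*j+1)) := by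
    rw [hV1, hProdX, hProdX1]
  have hy0 : y 0 ≠ 0 := ne_of_gt (hy 0)
  have hCne : (∏ j ∈ Finset.range l, y (2*j+1)) ≠ 0 :=
    ne_of_gt (Finset.prod_pos fun j _ => hy _)
  have hDne : (∏ j ∈ Finset.range l, y (2*j+2)) ≠ 0 :=
    ne_of_gt (Finset.prod_pos fun j _ => hy _)
  rw [hWx, hWFx, hV1x]
  field_simp
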